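/- For every simple inequality formula φ: φ is QP-valid (true in every Gärdenfors model) if and only if its translation φ^△ is QPG-valid (has value 1 under the valuation of every QPG model). -/

import Mathlib

/-- Classical propositional formulas (over `~` and `∧`). -/
inductive CPForm : Type
  | atom : ℕ → CPForm
  | neg  : CPForm → CPForm
  | and  : CPForm → CPForm → CPForm

/-- Boolean evaluation of classical formulas. -/
def cpeval (v : ℕ → Bool) : CPForm → Bool
  | .atom n => v n
  | .neg φ => !(cpeval v φ)
  | .and φ ψ => cpeval v φ && cpeval v ψ

/-- `φ` is a classical tautology. -/
def CPTaut (φ : CPForm) : Prop := ∀ v : ℕ → Bool, cpeval v φ = true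

/-- The extension `‖φ‖` of a classical formula in a model with valuation `v`. -/
def cpset {W : Type} (v : ℕ → Set W) : CPForm → Set W
  | .atom n => v n
  | .neg φ => (cpset v φ)ᶜ
  | .and φ ψ => cpset v φ ∩ cpset v ψ

/-- Defined classical implication `φ ⊃ ψ := ~(φ ∧ ~ψ)`. -/
def cpImp (φ ψ : CPForm) : CPForm := (φ.and ψ.neg).neg

/-- Defined classical disjunction `φ ∨ ψ := ~(~φ ∧ ~ψ)`. -/
def cpOr (φ ψ : CPForm) : CPForm := ((φ.neg).and ψ.neg).neg

/-- A classical contradiction `p ∧ ~p`. -/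
def cpBot : CPForm := (CPForm.atom 0).and (CPForm.atom 0).neg

/-- A classical tautology `~(p ∧ ~p)`. -/
def cpTop : CPForm := cpBot.neg

/-- Formulas of the language `L_QG`: atoms `B φ` for classical `φ`,
closed under `∧`, `∨`, `→_G`, `⤙_G`. -/
inductive QGForm : Type
  | bel   : CPForm → QGForm
  | and   : QGForm → QGForm → QGForm
  | or    : QGForm → QGForm → QGForm
  | imp   : QGForm → QGForm → QGForm
  | coimp : QGForm → QGForm → QGForm

/-- Gödel implication on `[0,1] ⊆ ℝ`. -/
noncomputable def gimp (a b : ℝ) : ℝ := if a ≤ b then 1 else b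

/-- Gödel co-implication on `[0,1] ⊆ ℝ`. -/
noncomputable def gcoimp (a b : ℝ) : ℝ := if a ≤ b then 0 else a

/-- The bi-Gödel valuation of `L_QG` formulas in a QG model given by measure `μ`
and classical valuation `v`: `e(Bφ) = μ(‖φ‖)`. -/
noncomputable def qgeval {W : Type} (μ : Set W → ℝ) (v : ℕ → Set W) : QGForm → ℝ
  | .bel φ => μ (cpset v φ)
  | .and α β => min (qgeval μ v α) (qgeval μ v β)
  | .or α β => max (qgeval μ v α) (qgeval μ v β)
  | .imp α β => gimp (qgeval μ v α) (qgeval μ v β)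
  | .coimp α β => gcoimp (qgeval μ v α) (qgeval μ v β)

/-- `μ` is an uncertainty measure on `W`: `[0,1]`-valued, monotone w.r.t. `⊆`,
and `μ(W) > μ(∅)`. -/
def IsUncertainty {W : Type} (μ : Set W → ℝ) : Prop :=
  (∀ X : Set W, μ X ∈ Set.Icc (0:ℝ) 1) ∧ Monotone μ ∧ μ ∅ < μ Set.univ

/-- `⊤_G` in `L_QG`. -/
def qTop : QGForm := (QGForm.bel (CPForm.atom 0)).imp (QGForm.bel (CPForm.atom 0))
/-- `⊥_G` in `L_QG`. -/
def qBot : QGForm := (QGForm.bel (CPForm.atom 0)).coimp (QGForm.bel (CPForm.atom 0))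
/-- Gödel negation `~_G α := α →_G ⊥_G`. -/
def qNot (α : QGForm) : QGForm := α.imp qBot
/-- `△α := (⊤_G ⤙_G α) →_G ⊥_G`. -/
def qDelta (α : QGForm) : QGForm := (qTop.coimp α).imp qBot
/-- `α ↔_G β := (α →_G β) ∧ (β →_G α)`. -/
def qIff (α β : QGForm) : QGForm := (α.imp β).and (β.imp α)

/-- Validity of an `L_QG` formula on an uncertainty frame `⟨W, μ⟩`:
value `1` in every QG model on the frame. -/
def QGValidOnFrame {W : Type} (μ : Set W → ℝ) (α : QGForm) : Prop :=
  ∀ v : ℕ → Set W, qgeval μ v α = 1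

/-- A finitely additive probability measure on `P(W)`, valued in `[0,1]`. -/
def IsProbMeasure {W : Type} (π : Set W → ℝ) : Prop :=
  π ∅ = 0 ∧ π Set.univ = 1 ∧ (∀ X : Set W, π X ∈ Set.Icc (0:ℝ) 1) ∧
    ∀ A B : Set W, Disjoint A B → π (A ∪ B) = π A + π B

/-- Simple inequality formulas: Boolean combinations (via `~`, `∧`, `∨`, `⊃`)
of inequalities `χ ≲ χ'` between classical formulas. -/
inductive SIF : Type
  | leq : CPForm → CPForm → SIF
  | neg : SIF → SIF
  | and : SIF → SIF → SIF
  | or  : SIF → SIF → SIF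
  | imp : SIF → SIF → SIF

/-- Satisfaction of a SIF at a point of a Gärdenfors model: since SIFs contain no
free propositional atoms, it only depends on the measure `P` attached to the point
(and the valuation `v`). -/
def SIFsat {W : Type} (P : Set W → ℝ) (v : ℕ → Set W) : SIF → Prop
  | .leq χ χ' => P (cpset v χ) ≤ P (cpset v χ')
  | .neg φ => ¬ SIFsat P v φ
  | .and φ ψ => SIFsat P v φ ∧ SIFsat P v ψ
  | .or φ ψ => SIFsat P v φ ∨ SIFsat P v ψ
  | .imp φ ψ => SIFsat P v φ → SIFsat P v ψ

/-- The translation `φ^△` of SIFs into `L_QG`. -/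
def sifTrans : SIF → QGForm
  | .leq χ χ' => qDelta ((QGForm.bel χ).imp (QGForm.bel χ'))
  | .neg φ => qNot (sifTrans φ)
  | .and φ ψ => (sifTrans φ).and (sifTrans ψ)
  | .or φ ψ => (sifTrans φ).or (sifTrans ψ)
  | .imp φ ψ => (sifTrans φ).imp (sifTrans ψ)

/-- `μ` satisfies the Kraft–Pratt–Seidenberg conditions `μKPS_m` for all `m`:
for all families `X_0,…,X_m`, `Y_0,…,Y_m` of subsets of `W`, if `μ(X_j) ≤ μ(Y_j)`
for all `j < m` and every `w ∈ W` belongs to exactly as many `X_i`'s as `Y_i`'s,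
then `μ(X_m) ≥ μ(Y_m)`. -/
def muKPS {W : Type} (μ : Set W → ℝ) : Prop :=
  ∀ (m : ℕ) (X Y : Fin (m + 1) → Set W),
    (∀ j : Fin m, μ (X j.castSucc) ≤ μ (Y j.castSucc)) →
    (∀ w : W, Nat.card {i : Fin (m + 1) // w ∈ X i} = Nat.card {i : Fin (m + 1) // w ∈ Y i}) →
    μ (Y (Fin.last m)) ≤ μ (X (Fin.last m))

/-- A SIF is QP-valid: true at every point of every Gärdenfors model. -/
def QPValid (φ : SIF) : Prop :=
  ∀ (U : Type) (_ : Nonempty U) (P : U → Set U → ℝ),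
    (∀ y : U, IsProbMeasure (P y)) → ∀ (v : ℕ → Set U) (x : U), SIFsat (P x) v φ

/-- The translation of a SIF is QPG-valid: it has value `1` in every QPG model. -/
def QPGValid (α : QGForm) : Prop :=
  ∀ (W : Type) (_ : Nonempty W) (μ : Set W → ℝ),
    IsUncertainty μ → muKPS μ → ∀ v : ℕ → Set W, qgeval μ v α = 1

/-! ## Part A: semantics of the translation -/

attribute [local instance] Classical.propDecidable

lemma qgeval_qBot {W : Type} (μ : Set W → ℝ) (v : ℕ → Set W) : qgeval μ v qBot = 0 := by
  simp [qBot, qgeval, gcoimp]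

lemma qgeval_qTop {W : Type} (μ : Set W → ℝ) (v : ℕ → Set W) : qgeval μ v qTop = 1 := by
  simp [qTop, qgeval, gimp]

lemma qgeval_qDelta {W : Type} (μ : Set W → ℝ) (v : ℕ → Set W) (α : QGForm) :
    qgeval μ v (qDelta α) = if 1 ≤ qgeval μ v α then 1 else 0 := by
  have hT := qgeval_qTop μ v
  have hB := qgeval_qBot μ v
  by_cases h : 1 ≤ qgeval μ v α
  · simp [qDelta, qgeval, hT, hB, gcoimp, gimp, h]
  · simp [qDelta, qgeval, hT, hB, gcoimp, gimp, h]

lemma qgeval_sifTrans {W : Type} (μ : Set W → ℝ) (hμ : ∀ X : Set W, μ X ∈ Set.Icc (0:ℝ) 1)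
    (v : ℕ → Set W) (φ : SIF) :
    qgeval μ v (sifTrans φ) = if SIFsat μ v φ then 1 else 0 := by
  induction φ with
  | leq χ χ' =>
      have h1 := (hμ (cpset v χ)).2
      have h2 := (hμ (cpset v χ')).2
      rw [sifTrans, qgeval_qDelta]
      show (if 1 ≤ gimp (μ (cpset v χ)) (μ (cpset v χ')) then (1:ℝ) else 0) = _
      by_cases h : μ (cpset v χ) ≤ μ (cpset v χ')
      · simp [gimp, h, SIFsat]
      · have : gimp (μ (cpset v χ)) (μ (cpset v χ')) = μ (cpset v χ') := by simp [gimp, h]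
        rw [this]
        have hlt : μ (cpset v χ') < 1 := lt_of_lt_of_le (lt_of_not_ge h) h1
        simp [SIFsat, h, not_le.mpr hlt]
  | neg ψ ih =>
      show gimp (qgeval μ v (sifTrans ψ)) (qgeval μ v qBot) = _
      rw [qgeval_qBot, ih]
      by_cases h : SIFsat μ v ψ <;> simp [gimp, h, SIFsat]
  | and ψ ψ' ih ih' =>
      show min (qgeval μ v (sifTrans ψ)) (qgeval μ v (sifTrans ψ')) = _
      rw [ih, ih']
      by_cases h : SIFsat μ v ψ <;> by_cases h' : SIFsat μ v ψ' <;>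
        simp [h, h', SIFsat]
  | or ψ ψ' ih ih' =>
      show max (qgeval μ v (sifTrans ψ)) (qgeval μ v (sifTrans ψ')) = _
      rw [ih, ih']
      by_cases h : SIFsat μ v ψ <;> by_cases h' : SIFsat μ v ψ' <;>
        simp [h, h', SIFsat]
  | imp ψ ψ' ih ih' =>
      show gimp (qgeval μ v (sifTrans ψ)) (qgeval μ v (sifTrans ψ')) = _
      rw [ih, ih']
      by_cases h : SIFsat μ v ψ <;> by_cases h' : SIFsat μ v ψ' <;>
        simp [gimp, h, h', SIFsat]

lemma qgeval_sifTrans_eq_one_iff {W : Type} (μ : Set W → ℝ)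
    (hμ : ∀ X : Set W, μ X ∈ Set.Icc (0:ℝ) 1) (v : ℕ → Set W) (φ : SIF) :
    qgeval μ v (sifTrans φ) = 1 ↔ SIFsat μ v φ := by
  rw [qgeval_sifTrans μ hμ v φ]
  by_cases h : SIFsat μ v φ <;> simp [h]

/-! ## Part B: probability measures are KPS uncertainty measures -/

section ProbKPS

variable {W : Type} {π : Set W → ℝ}

lemma prob_mono (hπ : IsProbMeasure π) : Monotone π := by
  intro A B hAB
  have h := hπ.2.2.2 A (B \ A) Set.disjoint_sdiff_right
  rw [Set.union_diff_cancel hAB] at h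
  have := (hπ.2.2.1 (B \ A)).1
  linarith

lemma prob_isUncertainty (hπ : IsProbMeasure π) : IsUncertainty π :=
  ⟨hπ.2.2.1, prob_mono hπ, by rw [hπ.1, hπ.2.1]; norm_num⟩

lemma prob_biUnion (hπ : IsProbMeasure π) {α : Type} [DecidableEq α] (t : Finset α)
    (f : α → Set W) (hd : ∀ a ∈ t, ∀ b ∈ t, a ≠ b → Disjoint (f a) (f b)) :
    π (⋃ a ∈ t, f a) = ∑ a ∈ t, π (f a) := by
  induction t using Finset.induction_on with
  | empty => simpa using hπ.1
  | @insert a s ha ih =>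
      rw [Finset.sum_insert ha, Finset.set_biUnion_insert]
      rw [hπ.2.2.2 (f a) (⋃ b ∈ s, f b) ?_, ih ?_]
      · intro x hx y hy hxy
        exact hd x (Finset.mem_insert_of_mem hx) y (Finset.mem_insert_of_mem hy) hxy
      · rw [Set.disjoint_iUnion_right]
        intro b
        rw [Set.disjoint_iUnion_right]
        intro hb
        exact hd a (Finset.mem_insert_self a s) b (Finset.mem_insert_of_mem hb)
          (fun h => ha (h ▸ hb))

/-- The cell of a family of sets determined by a boolean signature. -/
def pcell {ι : Type} (Z : ι → Set W) (s : ι → Bool) : Set W :=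
  {w | ∀ i, w ∈ Z i ↔ s i = true}

lemma pcell_disjoint {ι : Type} (Z : ι → Set W) {s s' : ι → Bool} (h : s ≠ s') :
    Disjoint (pcell Z s) (pcell Z s') := by
  rw [Set.disjoint_left]
  intro w hw hw'
  apply h
  funext i
  have h1 := hw i
  have h2 := hw' i
  by_cases hz : w ∈ Z i
  · rw [h1.mp hz, h2.mp hz]
  · cases hs : s i
    · cases hs' : s' i
      · rfl
      · exact absurd (h2.mpr hs') hz
    · exact absurd (h1.mpr hs) hz

lemma Z_eq_union_pcell {ι : Type} [Fintype ι] [DecidableEq ι] (Z : ι → Set W) (i : ι) :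
    Z i = ⋃ s ∈ Finset.univ.filter (fun s : ι → Bool => s i = true), pcell Z s := by
  ext w
  constructor
  · intro hw
    have h1 : (fun j => decide (w ∈ Z j)) ∈ Finset.univ.filter
        (fun s : ι → Bool => s i = true) := by
      refine Finset.mem_filter.mpr ⟨Finset.mem_univ _, ?_⟩
      simpa using hw
    refine Set.mem_biUnion h1 (fun j => ?_)
    show w ∈ Z j ↔ decide (w ∈ Z j) = true
    simp
  · intro hw
    obtain ⟨s, hs, hws⟩ := Set.mem_iUnion₂.mp hw
    exact (hws i).mpr (Finset.mem_filter.mp hs).2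

lemma prob_sum_family (hπ : IsProbMeasure π) {ι : Type} [Fintype ι] [DecidableEq ι]
    {J : Type} [Fintype J] (Z : ι → Set W) (g : J → ι) :
    ∑ j : J, π (Z (g j)) =
      ∑ s : ι → Bool, ((Finset.univ.filter fun j : J => s (g j) = true).card : ℝ) *
        π (pcell Z s) := by
  have key : ∀ j : J, π (Z (g j)) =
      ∑ s : ι → Bool, if s (g j) = true then π (pcell Z s) else 0 := by
    intro j
    rw [Z_eq_union_pcell Z (g j), prob_biUnion hπ _ _
      (fun a _ b _ hab => pcell_disjoint Z hab), Finset.sum_filter]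
  calc ∑ j : J, π (Z (g j)) = ∑ j : J, ∑ s : ι → Bool, if s (g j) = true
          then π (pcell Z s) else 0 := Finset.sum_congr rfl (fun j _ => key j)
    _ = ∑ s : ι → Bool, ∑ j : J, if s (g j) = true then π (pcell Z s) else 0 :=
        Finset.sum_comm
    _ = _ := by
        refine Finset.sum_congr rfl (fun s _ => ?_)
        rw [Finset.sum_ite, Finset.sum_const, Finset.sum_const_zero, add_zero,
          nsmul_eq_mul]

lemma prob_muKPS (hπ : IsProbMeasure π) : muKPS π := by
  intro m X Y hle hcount
  set ι := (Fin (m+1)) ⊕ (Fin (m+1)) with hι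
  set Z : ι → Set W := Sum.elim X Y with hZ
  have hsum : ∑ i : Fin (m+1), π (X i) = ∑ i : Fin (m+1), π (Y i) := by
    have h1 := prob_sum_family hπ Z (Sum.inl : Fin (m+1) → ι)
    have h2 := prob_sum_family hπ Z (Sum.inr : Fin (m+1) → ι)
    simp only [hZ, Sum.elim_inl, Sum.elim_inr] at h1 h2
    rw [h1, h2]
    refine Finset.sum_congr rfl (fun s _ => ?_)
    by_cases hc : π (pcell Z s) = 0
    · rw [hc, mul_zero, mul_zero]
    · have hne : (pcell Z s).Nonempty := by
        rw [Set.nonempty_iff_ne_empty]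
        intro h
        exact hc (h ▸ hπ.1)
      obtain ⟨w, hw⟩ := hne
      congr 1
      have hXc : (Finset.univ.filter fun j : Fin (m+1) => s (Sum.inl j) = true) =
          (Finset.univ.filter fun j : Fin (m+1) => w ∈ X j) := by
        refine Finset.filter_congr (fun j _ => ?_)
        have := hw (Sum.inl j)
        simp only [hZ, Sum.elim_inl] at this
        simp [this]
      have hYc : (Finset.univ.filter fun j : Fin (m+1) => s (Sum.inr j) = true) =
          (Finset.univ.filter fun j : Fin (m+1) => w ∈ Y j) := by
        refine Finset.filter_congr (fun j _ => ?_)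
        have := hw (Sum.inr j)
        simp only [hZ, Sum.elim_inr] at this
        simp [this]
      have hcard : ∀ (A : Fin (m+1) → Set W),
          (Finset.univ.filter fun j : Fin (m+1) => w ∈ A j).card =
            Nat.card {i : Fin (m+1) // w ∈ A i} := by
        intro A
        rw [Nat.card_eq_fintype_card, Fintype.card_subtype]
      rw [hXc, hYc, hcard X, hcard Y, hcount w]
  rw [Fin.sum_univ_castSucc, Fin.sum_univ_castSucc] at hsum
  have hle' : ∑ i : Fin m, π (X i.castSucc) ≤ ∑ i : Fin m, π (Y i.castSucc) :=
    Finset.sum_le_sum (fun i _ => hle i)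
  linarith

end ProbKPS

/-! ## Part C1: Farkas' lemma over `ℚ` -/

section Farkas

variable {C : Type} [Fintype C]

/-- Dot product on `C → ℚ`. -/
def qdot (a b : C → ℚ) : ℚ := ∑ σ : C, a σ * b σ

lemma qdot_comm (a b : C → ℚ) : qdot a b = qdot b a := by
  simp [qdot, mul_comm]

lemma qdot_sub_right (y a b : C → ℚ) : qdot y (a - b) = qdot y a - qdot y b := by
  simp [qdot, mul_sub, Finset.sum_sub_distrib]

lemma qdot_add_right (y a b : C → ℚ) : qdot y (a + b) = qdot y a + qdot y b := by
  simp [qdot, mul_add, Finset.sum_add_distrib]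

lemma qdot_smul_right (y : C → ℚ) (c : ℚ) (a : C → ℚ) : qdot y (c • a) = c * qdot y a := by
  simp [qdot, Finset.mul_sum]
  ring_nf
  exact Finset.sum_congr rfl (fun σ _ => by ring)

lemma qdot_sub_left (a b y : C → ℚ) : qdot (a - b) y = qdot a y - qdot b y := by
  rw [qdot_comm, qdot_sub_right, qdot_comm y a, qdot_comm y b]

lemma qdot_add_left (a b y : C → ℚ) : qdot (a + b) y = qdot a y + qdot b y := by
  rw [qdot_comm, qdot_add_right, qdot_comm y a, qdot_comm y b]

lemma qdot_smul_left (c : ℚ) (a y : C → ℚ) : qdot (c • a) y = c * qdot a y := by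
  rw [qdot_comm, qdot_smul_right, qdot_comm]

lemma qdot_zero_left (y : C → ℚ) : qdot 0 y = 0 := by simp [qdot]

lemma qdot_zero_right (y : C → ℚ) : qdot y 0 = 0 := by simp [qdot]

lemma qdot_neg_right (y b : C → ℚ) : qdot y (-b) = - qdot y b := by
  simp [qdot, Finset.sum_neg_distrib]

lemma qdot_self_pos {y : C → ℚ} (h : y ≠ 0) : 0 < qdot y y := by
  obtain ⟨σ, hσ⟩ : ∃ σ, y σ ≠ 0 := by
    by_contra hc
    push_neg at hc
    exact h (funext hc)
  exact Finset.sum_pos' (fun i _ => mul_self_nonneg _)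
    ⟨σ, Finset.mem_univ σ, mul_self_pos.mpr hσ⟩

/-- `x` is a nonnegative combination of the vectors in `l`. -/
def InCone : List (C → ℚ) → (C → ℚ) → Prop
  | [], x => x = 0
  | a :: l, x => ∃ c : ℚ, 0 ≤ c ∧ InCone l (x - c • a)

lemma incone_unproject (y a : C → ℚ) (hya : qdot y a < 0) :
    ∀ (t : List (C → ℚ)) (x : C → ℚ), (∀ g ∈ t, 0 ≤ qdot y g) → qdot y x ≤ 0 →
      InCone (t.map fun g => g - ((qdot y g)/(qdot y a)) • a)
        (x - ((qdot y x)/(qdot y a)) • a) →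
      InCone (a :: t) x := by
  intro t
  induction t with
  | nil =>
      intro x _ hyx h
      refine ⟨(qdot y x)/(qdot y a), ?_, ?_⟩
      · rw [div_nonneg_iff]
        right
        exact ⟨hyx, hya.le⟩
      · exact h
  | cons g t ih =>
      intro x hyg hyx h
      obtain ⟨lam, hlam, h'⟩ := h
      have hg : 0 ≤ qdot y g := hyg g List.mem_cons_self
      have hx' : qdot y (x - lam • g) ≤ 0 := by
        rw [qdot_sub_right, qdot_smul_right]
        nlinarith
      have heq : x - ((qdot y x)/(qdot y a)) • a - lam • (g - ((qdot y g)/(qdot y a)) • a)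
          = (x - lam • g) - ((qdot y (x - lam • g))/(qdot y a)) • a := by
        rw [qdot_sub_right, qdot_smul_right]
        funext σ
        simp only [Pi.sub_apply, Pi.smul_apply, smul_eq_mul]
        field_simp
        ring
      rw [heq] at h'
      obtain ⟨c, hc, h''⟩ := ih (x - lam • g) (fun g' hg' => hyg g' (List.mem_cons_of_mem g hg'))
        hx' h'
      refine ⟨c, hc, lam, hlam, ?_⟩
      have : x - c • a - lam • g = x - lam • g - c • a := by
        funext σ; simp only [Pi.sub_apply, Pi.smul_apply, smul_eq_mul]; ring
      rw [this]
      exact h''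

theorem farkas : ∀ (n : ℕ) (l : List (C → ℚ)), l.length = n → ∀ b : C → ℚ,
    InCone l b ∨ ∃ y : C → ℚ, (∀ g ∈ l, 0 ≤ qdot y g) ∧ qdot y b < 0 := by
  intro n
  induction n with
  | zero =>
      intro l hl b
      rw [List.length_eq_zero_iff] at hl
      subst hl
      by_cases hb : b = 0
      · exact Or.inl hb
      · refine Or.inr ⟨-b, by simp, ?_⟩
        rw [qdot_comm, qdot_neg_right]
        linarith [qdot_self_pos hb]
  | succ n ih =>
      intro l hl b
      match l, hl with
      | a :: t, hl =>
        have htl : t.length = n := by simpa using hl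
        rcases ih t htl b with h | ⟨y, hy, hyb⟩
        · exact Or.inl ⟨0, le_refl 0, by simpa using h⟩
        · by_cases hya : 0 ≤ qdot y a
          · refine Or.inr ⟨y, ?_, hyb⟩
            intro g hg
            rcases List.mem_cons.mp hg with rfl | hg
            · exact hya
            · exact hy g hg
          · push_neg at hya
            set π : (C → ℚ) → (C → ℚ) :=
              fun x => x - ((qdot y x)/(qdot y a)) • a with hπ
            have hmaplen : (t.map π).length = n := by simpa using htl
            rcases ih (t.map π) hmaplen (π b) with h | ⟨z, hz, hzb⟩
            · exact Or.inl (incone_unproject y a hya t b hy hyb.le h)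
            · set w : C → ℚ := z - ((qdot z a)/(qdot y a)) • y with hw
              have hkey : ∀ x : C → ℚ, qdot w x = qdot z (π x) := by
                intro x
                rw [hw, hπ]
                rw [qdot_sub_left, qdot_smul_left, qdot_sub_right, qdot_smul_right]
                rw [qdot_comm y x]
                field_simp
              refine Or.inr ⟨w, ?_, ?_⟩
              · intro g hg
                rcases List.mem_cons.mp hg with rfl | hg
                · rw [hkey]
                  have : π g = 0 := by
                    rw [hπ]
                    simp only
                    rw [div_self hya.ne, one_smul, sub_self]
                  rw [this, qdot_zero_right]
                · rw [hkey]
                  exact hz (π g) (List.mem_map_of_mem (f := π) hg)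
              · rw [hkey]
                exact hzb

theorem farkas_pos (l : List (C → ℚ)) (e : C → ℚ) :
    InCone l (-e) ∨ ∃ y : C → ℚ, (∀ g ∈ l, 0 ≤ qdot y g) ∧ 0 < qdot y e := by
  rcases farkas l.length l rfl (-e) with h | ⟨y, hy, hyb⟩
  · exact Or.inl h
  · refine Or.inr ⟨y, hy, ?_⟩
    rw [qdot_neg_right] at hyb
    linarith

end Farkas

/-! ## Part C2: auxiliary counting lemmas, `muKPS` in list form, integer extraction -/

section Aux

lemma countP_replicate {α : Type} (p : α → Bool) (n : ℕ) (a : α) :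
    (List.replicate n a).countP p = n * (if p a then 1 else 0) := by
  induction n with
  | zero => simp
  | succ n ih =>
      rw [List.replicate_succ, List.countP_cons, ih]
      by_cases h : p a <;> simp [h] <;> try ring

lemma countP_eq_sum_fin {α : Type} (l : List α) (p : α → Bool) :
    l.countP p = ∑ i : Fin l.length, if p (l.get i) then 1 else 0 := by
  induction l with
  | nil => simp
  | cons a t ih =>
      rw [List.countP_cons]
      simp only [List.length_cons]
      rw [Fin.sum_univ_succ]
      simp only [List.get_cons_zero]
      have : ∑ i : Fin t.length, (if p ((a :: t).get i.succ) then 1 else 0)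
          = ∑ i : Fin t.length, if p (t.get i) then 1 else 0 :=
        Finset.sum_congr rfl (fun i _ => rfl)
      rw [this, ← ih]
      exact (add_comm _ _).trans (by congr 1)

lemma muKPS_pairs {W : Type} {μ : Set W → ℝ} (h : muKPS μ)
    (ps : List (Set W × Set W)) (Xm Ym : Set W)
    (hw : ∀ p ∈ ps, μ p.1 ≤ μ p.2)
    (hc : ∀ w : W, (ps.countP fun p => decide (w ∈ p.1)) + (if w ∈ Xm then 1 else 0)
        = (ps.countP fun p => decide (w ∈ p.2)) + (if w ∈ Ym then 1 else 0)) :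
    μ Ym ≤ μ Xm := by
  set m := ps.length with hm
  set X : Fin (m+1) → Set W := Fin.snoc (fun i : Fin m => (ps.get i).1) Xm with hX
  set Y : Fin (m+1) → Set W := Fin.snoc (fun i : Fin m => (ps.get i).2) Ym with hY
  have hXlast : X (Fin.last m) = Xm := by rw [hX, Fin.snoc_last]
  have hYlast : Y (Fin.last m) = Ym := by rw [hY, Fin.snoc_last]
  rw [← hXlast, ← hYlast]
  apply h m X Y
  · intro j
    rw [hX, hY, Fin.snoc_castSucc, Fin.snoc_castSucc]
    exact hw _ (List.get_mem ps ⟨j.1, j.2⟩)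
  · intro w
    have hcard : ∀ (A : Fin (m+1) → Set W),
        Nat.card {i : Fin (m+1) // w ∈ A i} =
          ∑ i : Fin (m+1), if w ∈ A i then 1 else 0 := by
      intro A
      rw [Nat.card_eq_fintype_card, Fintype.card_subtype, Finset.card_filter]
    rw [hcard X, hcard Y, Fin.sum_univ_castSucc, Fin.sum_univ_castSucc]
    have hXcnt : ∀ i : Fin m, X i.castSucc = (ps.get i).1 := by
      intro i; rw [hX, Fin.snoc_castSucc]
    have hYcnt : ∀ i : Fin m, Y i.castSucc = (ps.get i).2 := by
      intro i; rw [hY, Fin.snoc_castSucc]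
    have e1 : ∑ i : Fin m, (if w ∈ X i.castSucc then 1 else 0)
        = ps.countP fun p => decide (w ∈ p.1) := by
      rw [countP_eq_sum_fin]
      exact Finset.sum_congr rfl (fun i _ => by rw [hXcnt i]; simp)
    have e2 : ∑ i : Fin m, (if w ∈ Y i.castSucc then 1 else 0)
        = ps.countP fun p => decide (w ∈ p.2) := by
      rw [countP_eq_sum_fin]
      exact Finset.sum_congr rfl (fun i _ => by rw [hYcnt i]; simp)
    rw [e1, e2, hXlast, hYlast]
    exact hc w

end Aux

section IntExtract

variable {C : Type} [Fintype C]

lemma rat_den_mul (lam : ℚ) : (lam.den : ℚ) * lam = (lam.num : ℚ) := by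
  have hd : (lam.den : ℚ) ≠ 0 := by exact_mod_cast lam.den_nz
  calc (lam.den : ℚ) * lam = (lam.den : ℚ) * ((lam.num : ℚ) / (lam.den : ℚ)) :=
        congrArg _ (Rat.num_div_den lam).symm
    _ = (lam.num : ℚ) := mul_div_cancel₀ _ hd

lemma InCone_nat (l : List (C → ℚ)) (x : C → ℚ) (h : InCone l x) :
    ∃ N : ℕ, 0 < N ∧ ∃ c : List ℕ, c.length = l.length ∧
      (N : ℚ) • x = ((l.zip c).map fun p => (p.2 : ℚ) • p.1).sum := by
  induction l generalizing x with
  | nil =>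
      refine ⟨1, one_pos, [], rfl, ?_⟩
      rw [h]
      simp
  | cons a t ih =>
      obtain ⟨lam, hlam, h'⟩ := h
      obtain ⟨N, hN, c, hlen, heq⟩ := ih _ h'
      refine ⟨N * lam.den, Nat.mul_pos hN lam.pos, (N * lam.num.toNat) :: (c.map (· * lam.den)),
        by simpa using hlen, ?_⟩
      have hzip : (a :: t).zip ((N * lam.num.toNat) :: (c.map (· * lam.den)))
          = (a, N * lam.num.toNat) :: (t.zip (c.map (· * lam.den))) := rfl
      rw [hzip, List.map_cons, List.sum_cons]
      have hzip2 : t.zip (c.map (· * lam.den)) = (t.zip c).map (Prod.map id (· * lam.den)) :=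
        List.zip_map_right
      have hsum2 : ((t.zip (c.map (· * lam.den))).map fun p => (p.2 : ℚ) • p.1).sum
          = (lam.den : ℚ) • ((t.zip c).map fun p => (p.2 : ℚ) • p.1).sum := by
        rw [hzip2, List.map_map, List.smul_sum, List.map_map]
        refine congrArg List.sum (List.map_congr_left (fun p _ => ?_))
        obtain ⟨g, n⟩ := p
        simp only [Function.comp_apply, Prod.map_apply, id_eq]
        push_cast
        funext σ
        simp only [Pi.smul_apply, smul_eq_mul]
        ring
      rw [hsum2, ← heq]
      have hnum : ((lam.num.toNat : ℚ)) = (lam.num : ℚ) := by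
        exact_mod_cast congrArg (Int.cast : ℤ → ℚ) (Int.toNat_of_nonneg (Rat.num_nonneg.mpr hlam))
      have hden : (lam.den : ℚ) * lam = (lam.num : ℚ) := rat_den_mul lam
      funext σ
      simp only [Pi.smul_apply, Pi.add_apply, Pi.sub_apply, smul_eq_mul, Pi.mul_apply]
      push_cast [hnum]
      linear_combination (↑N * a σ) * hden
  
lemma cone_combine (L : List (C → ℚ)) :
    ∀ (ts : List (C → ℚ)), (∀ e ∈ ts, ∃ y : C → ℚ, (∀ g ∈ L, 0 ≤ qdot y g) ∧ 0 < qdot y e) →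
    (∀ e ∈ ts, e ∈ L) →
    ∃ q : C → ℚ, (∀ g ∈ L, 0 ≤ qdot q g) ∧ ∀ e ∈ ts, 0 < qdot q e := by
  intro ts
  induction ts with
  | nil => exact fun _ _ => ⟨0, fun g _ => by rw [qdot_zero_left], fun e he => absurd he
      List.not_mem_nil⟩
  | cons e ts ih =>
      intro hex hmem
      obtain ⟨y, hy, hye⟩ := hex e List.mem_cons_self
      obtain ⟨q', hq', hq'ts⟩ := ih (fun e' he' => hex e' (List.mem_cons_of_mem e he'))
        (fun e' he' => hmem e' (List.mem_cons_of_mem e he'))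
      refine ⟨y + q', ?_, ?_⟩
      · intro g hg
        rw [qdot_add_left]
        exact add_nonneg (hy g hg) (hq' g hg)
      · intro e' he'
        rw [qdot_add_left]
        rcases List.mem_cons.mp he' with rfl | he'
        · have := hq' e' (hmem e' List.mem_cons_self)
          linarith
        · have := hy e' (hmem e' (List.mem_cons_of_mem e he'))
          have := hq'ts e' he'
          linarith

end IntExtract

/-! ## Part C3: the representation construction -/

/-- Strict bound on atoms occurring in a classical formula. -/
def maxAtomC : CPForm → ℕ
  | .atom n => n + 1
  | .neg χ => maxAtomC χ
  | .and χ χ' => max (maxAtomC χ) (maxAtomC χ')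

/-- Strict bound on atoms occurring in a SIF. -/
def maxAtomS : SIF → ℕ
  | .leq χ χ' => max (maxAtomC χ) (maxAtomC χ')
  | .neg ψ => maxAtomS ψ
  | .and ψ ψ' => max (maxAtomS ψ) (maxAtomS ψ')
  | .or ψ ψ' => max (maxAtomS ψ) (maxAtomS ψ')
  | .imp ψ ψ' => max (maxAtomS ψ) (maxAtomS ψ')

/-- The list of inequality pairs occurring in a SIF. -/
def pairsOf : SIF → List (CPForm × CPForm)
  | .leq χ χ' => [(χ, χ')]
  | .neg ψ => pairsOf ψ
  | .and ψ ψ' => pairsOf ψ ++ pairsOf ψ'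
  | .or ψ ψ' => pairsOf ψ ++ pairsOf ψ'
  | .imp ψ ψ' => pairsOf ψ ++ pairsOf ψ'

lemma pairsOf_maxAtom (φ : SIF) :
    ∀ pr ∈ pairsOf φ, maxAtomC pr.1 ≤ maxAtomS φ ∧ maxAtomC pr.2 ≤ maxAtomS φ := by
  induction φ with
  | leq χ χ' =>
      intro pr hpr
      simp only [pairsOf, List.mem_singleton] at hpr
      subst hpr
      exact ⟨le_max_left _ _, le_max_right _ _⟩
  | neg ψ ih => exact ih
  | and ψ ψ' ih ih' =>
      intro pr hpr
      rcases List.mem_append.mp hpr with h | h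
      · exact ⟨(ih pr h).1.trans (le_max_left _ _), (ih pr h).2.trans (le_max_left _ _)⟩
      · exact ⟨(ih' pr h).1.trans (le_max_right _ _), (ih' pr h).2.trans (le_max_right _ _)⟩
  | or ψ ψ' ih ih' =>
      intro pr hpr
      rcases List.mem_append.mp hpr with h | h
      · exact ⟨(ih pr h).1.trans (le_max_left _ _), (ih pr h).2.trans (le_max_left _ _)⟩
      · exact ⟨(ih' pr h).1.trans (le_max_right _ _), (ih' pr h).2.trans (le_max_right _ _)⟩
  | imp ψ ψ' ih ih' =>
      intro pr hpr
      rcases List.mem_append.mp hpr with h | h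
      · exact ⟨(ih pr h).1.trans (le_max_left _ _), (ih pr h).2.trans (le_max_left _ _)⟩
      · exact ⟨(ih' pr h).1.trans (le_max_right _ _), (ih' pr h).2.trans (le_max_right _ _)⟩

lemma cpeval_congr (χ : CPForm) (v1 v2 : ℕ → Bool) (h : ∀ n < maxAtomC χ, v1 n = v2 n) :
    cpeval v1 χ = cpeval v2 χ := by
  induction χ with
  | atom n => exact h n (Nat.lt_succ_self n)
  | neg χ ih => simp only [cpeval]; rw [ih h]
  | and χ χ' ih ih' =>
      simp only [cpeval]
      rw [ih (fun n hn => h n (lt_of_lt_of_le hn (le_max_left _ _))),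
        ih' (fun n hn => h n (lt_of_lt_of_le hn (le_max_right _ _)))]

lemma mem_cpset {W : Type} (v : ℕ → Set W) (χ : CPForm) (w : W) :
    w ∈ cpset v χ ↔ cpeval (fun n => if w ∈ v n then true else false) χ = true := by
  induction χ with
  | atom n =>
      simp only [cpset, cpeval]
      by_cases h : w ∈ v n <;> simp [h]
  | neg χ ih =>
      simp only [cpset, cpeval, Set.mem_compl_iff, ih, Bool.not_eq_true', Bool.not_eq_true]
  | and χ χ' ih ih' =>
      simp only [cpset, cpeval, Set.mem_inter_iff, ih, ih', Bool.and_eq_true]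

/-- Extension of a finite boolean valuation by `false`. -/
def extendB (M : ℕ) (σ : Fin M → Bool) : ℕ → Bool :=
  fun n => if h : n < M then σ ⟨n, h⟩ else false

open Classical in
/-- The signature of a point of `W`. -/
noncomputable def sigC {W : Type} (v : ℕ → Set W) (M : ℕ) (w : W) : Fin M → Bool :=
  fun i => if w ∈ v i then true else false

/-- The set of points of `W` whose signature lies in `S`. -/
def hatset {W : Type} (v : ℕ → Set W) (M : ℕ) (S : Set (Fin M → Bool)) : Set W :=
  {w | sigC v M w ∈ S}

/-- The set of signatures satisfying a classical formula. -/
def Tset (M : ℕ) (χ : CPForm) : Set (Fin M → Bool) :=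
  {σ | cpeval (extendB M σ) χ = true}

open Classical in
/-- `ℚ`-valued indicator function of a set. -/
noncomputable def indS {C : Type} (S : Set C) : C → ℚ :=
  fun σ => if σ ∈ S then 1 else 0

lemma hatset_mono {W : Type} (v : ℕ → Set W) (M : ℕ) {S S' : Set (Fin M → Bool)}
    (h : S ⊆ S') : hatset v M S ⊆ hatset v M S' := fun _ hw => h hw

lemma hatset_empty {W : Type} (v : ℕ → Set W) (M : ℕ) :
    hatset v M (∅ : Set (Fin M → Bool)) = ∅ := by
  ext w; simp [hatset]

lemma hatset_univ {W : Type} (v : ℕ → Set W) (M : ℕ) :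
    hatset v M (Set.univ : Set (Fin M → Bool)) = Set.univ := by
  ext w; simp [hatset]

lemma hatset_Tset {W : Type} (v : ℕ → Set W) (M : ℕ) (χ : CPForm) (hχ : maxAtomC χ ≤ M) :
    hatset v M (Tset M χ) = cpset v χ := by
  ext w
  rw [mem_cpset]
  show cpeval (extendB M (sigC v M w)) χ = true ↔ _
  have : cpeval (extendB M (sigC v M w)) χ
      = cpeval (fun n => if w ∈ v n then true else false) χ := by
    apply cpeval_congr
    intro n hn
    have hnM : n < M := lt_of_lt_of_le hn hχ
    simp [extendB, hnM, sigC]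
  rw [this]

/-- Expand a list of pairs of cell-sets with multiplicities into a list of pairs of
subsets of `W`. -/
def expandPairs {C W : Type} (hat : Set C → Set W) (ps : List (Set C × Set C))
    (c : List ℕ) : List (Set W × Set W) :=
  ((ps.zip c).map fun p => List.replicate p.2 (hat p.1.1, hat p.1.2)).flatten

attribute [local instance] Classical.propDecidable

lemma mem_expandPairs {C W : Type} (hat : Set C → Set W) (ps : List (Set C × Set C))
    (c : List ℕ) (p' : Set W × Set W) (h : p' ∈ expandPairs hat ps c) :
    ∃ p ∈ ps, p' = (hat p.1, hat p.2) := by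
  rw [expandPairs, List.mem_flatten] at h
  obtain ⟨l, hl, hp'⟩ := h
  rw [List.mem_map] at hl
  obtain ⟨q, hq, rfl⟩ := hl
  rw [List.mem_replicate] at hp'
  exact ⟨q.1, (List.of_mem_zip (a := q.1) (b := q.2) hq).1, hp'.2⟩

lemma bridge {C W : Type} [Fintype C] (hat : Set C → Set W) (sig : W → C)
    (hsig : ∀ (S : Set C) (w : W), w ∈ hat S ↔ sig w ∈ S) :
    ∀ (ps : List (Set C × Set C)) (c : List ℕ) (w : W),
      (((expandPairs hat ps c).countP fun p => decide (w ∈ p.1)) : ℚ)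
        + (List.map (fun p : (Set C × Set C) × ℕ => (p.2 : ℚ) • (indS p.1.2 - indS p.1.1))
            (ps.zip c)).sum (sig w)
      = ((expandPairs hat ps c).countP fun p => decide (w ∈ p.2)) := by
  intro ps
  induction ps with
  | nil => intro c w; simp [expandPairs]
  | cons p ps ih =>
      intro c w
      match c with
      | [] => simp [expandPairs]
      | k :: c =>
          have hexp : expandPairs hat (p :: ps) (k :: c)
              = List.replicate k (hat p.1, hat p.2) ++ expandPairs hat ps c := by
            rw [expandPairs, List.zip_cons_cons, List.map_cons, List.flatten_cons]
            rfl
          have hzip : (p :: ps).zip (k :: c) = (p, k) :: ps.zip c := rfl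
          rw [hexp, hzip, List.countP_append, List.countP_append, List.map_cons,
            List.sum_cons, countP_replicate, countP_replicate, Pi.add_apply,
            Pi.smul_apply, Pi.sub_apply]
          have key := ih c w
          have d1 : w ∈ hat p.1 ↔ sig w ∈ p.1 := hsig p.1 w
          have d2 : w ∈ hat p.2 ↔ sig w ∈ p.2 := hsig p.2 w
          by_cases h1 : sig w ∈ p.1 <;> by_cases h2 : sig w ∈ p.2 <;>
            · simp only [indS, h1, h2, if_true, if_false, d1, d2, decide_eq_true_eq,
                smul_eq_mul]
              push_cast
              linarith [key]

lemma incone_to_mu {C W : Type} [Fintype C] (μ : Set W → ℝ) (hK : muKPS μ)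
    (hat : Set C → Set W) (sig : W → C)
    (hsig : ∀ (S : Set C) (w : W), w ∈ hat S ↔ sig w ∈ S)
    (ps : List (Set C × Set C)) (hw : ∀ p ∈ ps, μ (hat p.1) ≤ μ (hat p.2))
    (S S' : Set C) (hS : μ (hat S) ≤ μ (hat S'))
    (h : InCone (ps.map fun p => indS p.2 - indS p.1) (indS S - indS S')) :
    μ (hat S') ≤ μ (hat S) := by
  obtain ⟨N, hN, c, hlen, heq⟩ := InCone_nat _ _ h
  rw [List.zip_map_left, List.map_map] at heq
  have hmapeq : (List.map ((fun p : (C → ℚ) × ℕ => (p.2 : ℚ) • p.1) ∘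
        Prod.map (fun p : Set C × Set C => indS p.2 - indS p.1) id) (ps.zip c))
      = (List.map (fun p : (Set C × Set C) × ℕ => (p.2 : ℚ) • (indS p.1.2 - indS p.1.1))
          (ps.zip c)) := by
    refine List.map_congr_left (fun q _ => ?_)
    obtain ⟨q1, q2⟩ := q
    rfl
  rw [hmapeq] at heq
  set ps_full : List (Set W × Set W) :=
    expandPairs hat ps c ++ List.replicate (N-1) (hat S, hat S') with hpf
  refine muKPS_pairs hK ps_full (hat S) (hat S') ?_ ?_
  · intro p hp
    rcases List.mem_append.mp hp with h' | h'
    · obtain ⟨q, hq, rfl⟩ := mem_expandPairs hat ps c p h'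
      exact hw q hq
    · rw [(List.mem_replicate.mp h').2]
      exact hS
  · intro w
    have hbr := bridge hat sig hsig ps c w
    have hKey : (List.map (fun p : (Set C × Set C) × ℕ =>
          (p.2 : ℚ) • (indS p.1.2 - indS p.1.1)) (ps.zip c)).sum (sig w)
        = N * (indS S (sig w)) - N * (indS S' (sig w)) := by
      rw [← heq, Pi.smul_apply, Pi.sub_apply, smul_eq_mul]
      ring
    have hiS : indS S (sig w) = if w ∈ hat S then (1:ℚ) else 0 := by
      rw [indS]; exact if_congr (hsig S w).symm rfl rfl
    have hiS' : indS S' (sig w) = if w ∈ hat S' then (1:ℚ) else 0 := by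
      rw [indS]; exact if_congr (hsig S' w).symm rfl rfl
    rw [hKey, hiS, hiS'] at hbr
    rw [hpf, List.countP_append, List.countP_append, countP_replicate, countP_replicate]
    simp only [decide_eq_true_eq]
    have hs : ∀ s : ℕ, (N-1) * s + s = N * s := by
      intro s
      have h1 : (N-1) + 1 = N := Nat.succ_pred_eq_of_pos hN
      calc (N-1)*s + s = ((N-1)+1)*s := by ring
        _ = N*s := by rw [h1]
    rw [add_assoc, add_assoc, hs, hs]
    have hcast : ∀ (E : Set W), (((if w ∈ E then 1 else 0 : ℕ)) : ℚ)
        = if w ∈ E then (1:ℚ) else 0 := by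
      intro E
      by_cases h : w ∈ E <;> simp [h]
    refine (Nat.cast_inj (R := ℚ)).mp ?_
    push_cast [hcast]
    linarith [hbr]

/-! ## Part C4: from KPS uncertainty measures to probability representations -/

section MainConstruction

attribute [local instance] Classical.propDecidable

lemma indS_empty {C : Type} : indS (∅ : Set C) = 0 := by
  funext σ; simp [indS]

lemma qdot_indS_singleton {C : Type} [Fintype C] (y : C → ℚ) (σ : C) :
    qdot y (indS ({σ} : Set C)) = y σ := by
  rw [qdot]
  rw [show ∑ τ : C, y τ * indS ({σ} : Set C) τ = ∑ τ : C, if τ = σ then y τ else 0 from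
    Finset.sum_congr rfl (fun τ _ => by by_cases h : τ = σ <;> simp [indS, h])]
  simp

lemma key_construction {W : Type} (μ : Set W → ℝ) (hU : IsUncertainty μ) (hK : muKPS μ)
    (v : ℕ → Set W) (φ : SIF) (hval : QPValid φ) : SIFsat μ v φ := by
  set M := maxAtomS φ with hM
  set hat : Set (Fin M → Bool) → Set W := hatset v M with hhat
  set sig : W → (Fin M → Bool) := sigC v M with hsg
  have hsig : ∀ (S : Set (Fin M → Bool)) (w : W), w ∈ hat S ↔ sig w ∈ S :=
    fun S w => Iff.rfl
  -- the list of weak constraints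
  set weakPairs : List (Set (Fin M → Bool) × Set (Fin M → Bool)) :=
    (∅, Set.univ) ::
      (((Finset.univ : Finset (Fin M → Bool)).toList.map
          fun σ => ((∅ : Set (Fin M → Bool)), ({σ} : Set (Fin M → Bool))))
        ++ ((pairsOf φ).map fun pr =>
            if μ (cpset v pr.1) ≤ μ (cpset v pr.2) then (Tset M pr.1, Tset M pr.2)
            else (Tset M pr.2, Tset M pr.1))) with hWP
  have hwweak : ∀ p ∈ weakPairs, μ (hat p.1) ≤ μ (hat p.2) := by
    intro p hp
    rw [hWP] at hp
    rcases List.mem_cons.mp hp with rfl | hp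
    · rw [hhat]
      simp only [hatset_empty, hatset_univ]
      exact hU.2.2.le
    · rcases List.mem_append.mp hp with hp | hp
      · obtain ⟨σ, _, rfl⟩ := List.mem_map.mp hp
        exact hU.2.1 (hatset_mono v M (Set.empty_subset _))
      · obtain ⟨pr, hpr, rfl⟩ := List.mem_map.mp hp
        obtain ⟨hb1, hb2⟩ := pairsOf_maxAtom φ pr hpr
        by_cases h : μ (cpset v pr.1) ≤ μ (cpset v pr.2)
        · rw [if_pos h]
          rw [hhat]
          simp only [hatset_Tset v M _ hb1, hatset_Tset v M _ hb2]
          exact h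
        · rw [if_neg h]
          rw [hhat]
          simp only [hatset_Tset v M _ hb1, hatset_Tset v M _ hb2]
          exact (not_le.mp h).le
  set L : List ((Fin M → Bool) → ℚ) := weakPairs.map (fun p => indS p.2 - indS p.1) with hL
  -- the list of strict constraints
  set strictTs : List (Set (Fin M → Bool) × Set (Fin M → Bool)) :=
    (∅, Set.univ) :: ((pairsOf φ).filterMap fun pr =>
      if μ (cpset v pr.1) ≤ μ (cpset v pr.2) then none
      else some (Tset M pr.2, Tset M pr.1)) with hST
  have hstrict : ∀ p ∈ strictTs, μ (hat p.1) < μ (hat p.2) := by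
    intro p hp
    rw [hST] at hp
    rcases List.mem_cons.mp hp with rfl | hp
    · rw [hhat]
      simp only [hatset_empty, hatset_univ]
      exact hU.2.2
    · obtain ⟨pr, hpr, hsome⟩ := List.mem_filterMap.mp hp
      by_cases h : μ (cpset v pr.1) ≤ μ (cpset v pr.2)
      · rw [if_pos h] at hsome; exact absurd hsome (by simp)
      · rw [if_neg h] at hsome
        obtain ⟨hb1, hb2⟩ := pairsOf_maxAtom φ pr hpr
        rw [← Option.some_inj.mp hsome] at *
        show μ (hat (Tset M pr.2)) < μ (hat (Tset M pr.1))
        rw [hhat]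
        simp only [hatset_Tset v M _ hb1, hatset_Tset v M _ hb2]
        exact not_le.mp h
  have hstrictmem : ∀ p ∈ strictTs, p ∈ weakPairs := by
    intro p hp
    rw [hST] at hp
    rcases List.mem_cons.mp hp with rfl | hp
    · rw [hWP]; exact List.mem_cons_self
    · obtain ⟨pr, hpr, hsome⟩ := List.mem_filterMap.mp hp
      by_cases h : μ (cpset v pr.1) ≤ μ (cpset v pr.2)
      · rw [if_pos h] at hsome; exact absurd hsome (by simp)
      · rw [if_neg h] at hsome
        rw [hWP]
        refine List.mem_cons_of_mem _ (List.mem_append_right _ ?_)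
        exact List.mem_map.mpr ⟨pr, hpr, by rw [if_neg h]; exact Option.some_inj.mp hsome⟩
  -- a single direction witness for each strict target
  have hexist : ∀ p ∈ strictTs, ∃ y : (Fin M → Bool) → ℚ,
      (∀ g ∈ L, 0 ≤ qdot y g) ∧ 0 < qdot y (indS p.2 - indS p.1) := by
    intro p hp
    rcases farkas_pos L (indS p.2 - indS p.1) with hc | ⟨y, hy, hpos⟩
    · exfalso
      rw [neg_sub] at hc
      have := incone_to_mu μ hK hat sig hsig weakPairs hwweak p.1 p.2
        (hstrict p hp).le (by rw [← hL]; exact hc)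
      exact absurd this (not_le.mpr (hstrict p hp))
    · exact ⟨y, hy, hpos⟩
  obtain ⟨q, hqL, hqS⟩ := cone_combine L (strictTs.map fun p => indS p.2 - indS p.1)
    (by
      intro e he
      obtain ⟨p, hp, rfl⟩ := List.mem_map.mp he
      exact hexist p hp)
    (by
      intro e he
      obtain ⟨p, hp, rfl⟩ := List.mem_map.mp he
      rw [hL]
      exact List.mem_map.mpr ⟨p, hstrictmem p hp, rfl⟩)
  -- facts about q
  have hq0 : ∀ σ : Fin M → Bool, 0 ≤ q σ := by
    intro σ
    have hmem : ((∅ : Set (Fin M → Bool)), ({σ} : Set (Fin M → Bool))) ∈ weakPairs := by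
      rw [hWP]
      exact List.mem_cons_of_mem _ (List.mem_append_left _
        (List.mem_map.mpr ⟨σ, Finset.mem_toList.mpr (Finset.mem_univ σ), rfl⟩))
    have := hqL _ (List.mem_map.mpr ⟨_, hmem, rfl⟩)
    rwa [qdot_sub_right, indS_empty, qdot_zero_right, sub_zero, qdot_indS_singleton] at this
  have htot : 0 < qdot q (indS (Set.univ : Set (Fin M → Bool))) := by
    have hmem : ((∅ : Set (Fin M → Bool)), (Set.univ : Set (Fin M → Bool))) ∈ strictTs := by
      rw [hST]; exact List.mem_cons_self
    have := hqS _ (List.mem_map.mpr ⟨_, hmem, rfl⟩)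
    rwa [qdot_sub_right, indS_empty, qdot_zero_right, sub_zero] at this
  have hpairle : ∀ pr ∈ pairsOf φ, μ (cpset v pr.1) ≤ μ (cpset v pr.2) →
      qdot q (indS (Tset M pr.1)) ≤ qdot q (indS (Tset M pr.2)) := by
    intro pr hpr h
    have hmem : (Tset M pr.1, Tset M pr.2) ∈ weakPairs := by
      rw [hWP]
      exact List.mem_cons_of_mem _ (List.mem_append_right _
        (List.mem_map.mpr ⟨pr, hpr, by rw [if_pos h]⟩))
    have := hqL _ (List.mem_map.mpr ⟨_, hmem, rfl⟩)
    rw [qdot_sub_right] at this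
    linarith
  have hpairlt : ∀ pr ∈ pairsOf φ, ¬ μ (cpset v pr.1) ≤ μ (cpset v pr.2) →
      qdot q (indS (Tset M pr.2)) < qdot q (indS (Tset M pr.1)) := by
    intro pr hpr h
    have hmem : (Tset M pr.2, Tset M pr.1) ∈ strictTs := by
      rw [hST]
      refine List.mem_cons_of_mem _ (List.mem_filterMap.mpr ⟨pr, hpr, by rw [if_neg h]⟩)
    have := hqS _ (List.mem_map.mpr ⟨_, hmem, rfl⟩)
    rw [qdot_sub_right] at this
    linarith
  -- basic properties of S ↦ qdot q (indS S)
  have hqd_nonneg : ∀ S : Set (Fin M → Bool), 0 ≤ qdot q (indS S) := by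
    intro S
    refine Finset.sum_nonneg (fun σ _ => ?_)
    by_cases h : σ ∈ S <;> simp [indS, h, hq0 σ]
  have hqd_le_univ : ∀ S : Set (Fin M → Bool),
      qdot q (indS S) ≤ qdot q (indS (Set.univ : Set (Fin M → Bool))) := by
    intro S
    refine Finset.sum_le_sum (fun σ _ => ?_)
    by_cases h : σ ∈ S <;> simp [indS, h, hq0 σ]
  have hqd_add : ∀ A B : Set (Fin M → Bool), Disjoint A B →
      qdot q (indS (A ∪ B)) = qdot q (indS A) + qdot q (indS B) := by
    intro A B hAB
    rw [← qdot_add_right]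
    congr 1
    funext σ
    by_cases hA : σ ∈ A
    · have hB : σ ∉ B := Set.disjoint_left.mp hAB hA
      simp [indS, hA, hB]
    · by_cases hB : σ ∈ B <;> simp [indS, hA, hB]
  -- the probability measure
  set tot : ℚ := qdot q (indS (Set.univ : Set (Fin M → Bool))) with htotdef
  set π : Set (Fin M → Bool) → ℝ := fun S => ((qdot q (indS S) / tot : ℚ) : ℝ) with hπ
  have hprob : IsProbMeasure π := by
    refine ⟨?_, ?_, ?_, ?_⟩
    · rw [hπ]
      simp [indS_empty, qdot_zero_right]
    · rw [hπ]
      simp only [← htotdef]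
      rw [div_self htot.ne']
      norm_num
    · intro X
      rw [hπ]
      constructor
      · simp only
        rw [show (0:ℝ) = ((0:ℚ):ℝ) by norm_num, Rat.cast_le]
        exact div_nonneg (hqd_nonneg X) htot.le
      · simp only
        rw [show (1:ℝ) = ((1:ℚ):ℝ) by norm_num, Rat.cast_le]
        rw [div_le_one htot]
        exact hqd_le_univ X
    · intro A B hAB
      rw [hπ]
      simp only
      rw [hqd_add A B hAB, add_div]
      push_cast
      ring
  -- the valuation on the new model
  set v' : ℕ → Set (Fin M → Bool) := fun n => {σ | extendB M σ n = true} with hv'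
  have hcpset' : ∀ χ : CPForm, cpset v' χ = Tset M χ := by
    intro χ
    ext σ
    rw [mem_cpset v' χ σ]
    have hgoal : cpeval (fun n => @ite _ (σ ∈ v' n) (Classical.propDecidable _) true false) χ
        = cpeval (extendB M σ) χ := by
      apply cpeval_congr
      intro n _
      by_cases h : σ ∈ v' n
      · rw [if_pos h]
        exact (show extendB M σ n = true from h).symm
      · rw [if_neg h]
        exact (Bool.not_eq_true _ ▸ (show ¬ extendB M σ n = true from h) : _).symm
    rw [hgoal]
    exact Iff.rfl
  -- apply QP-validity in the constructed model
  have hsat : SIFsat π v' φ :=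
    hval (Fin M → Bool) ⟨fun _ => false⟩ (fun _ => π) (fun _ => hprob) v' (fun _ => false)
  -- transfer satisfaction back to the original model
  have htrans : ∀ ψ : SIF, (∀ pr ∈ pairsOf ψ, pr ∈ pairsOf φ) →
      (SIFsat π v' ψ ↔ SIFsat μ v ψ) := by
    intro ψ
    induction ψ with
    | leq χ χ' =>
        intro hsub
        have hpr : (χ, χ') ∈ pairsOf φ := hsub (χ, χ') (List.mem_singleton.mpr rfl)
        show π (cpset v' χ) ≤ π (cpset v' χ') ↔ μ (cpset v χ) ≤ μ (cpset v χ')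
        rw [hcpset' χ, hcpset' χ', hπ]
        simp only [Rat.cast_le]
        rw [div_le_div_iff_of_pos_right htot]
        constructor
        · intro h
          by_contra hc
          have := hpairlt (χ, χ') hpr hc
          simp only at this
          linarith
        · intro h
          have := hpairle (χ, χ') hpr h
          simpa using this
    | neg ψ ih =>
        intro hsub
        show (¬ _) ↔ (¬ _)
        rw [ih hsub]
    | and ψ ψ' ih ih' =>
        intro hsub
        show (_ ∧ _) ↔ (_ ∧ _)
        rw [ih (fun pr h => hsub pr (List.mem_append_left _ h)),
          ih' (fun pr h => hsub pr (List.mem_append_right _ h))]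
    | or ψ ψ' ih ih' =>
        intro hsub
        show (_ ∨ _) ↔ (_ ∨ _)
        rw [ih (fun pr h => hsub pr (List.mem_append_left _ h)),
          ih' (fun pr h => hsub pr (List.mem_append_right _ h))]
    | imp ψ ψ' ih ih' =>
        intro hsub
        show (_ → _) ↔ (_ → _)
        rw [ih (fun pr h => hsub pr (List.mem_append_left _ h)),
          ih' (fun pr h => hsub pr (List.mem_append_right _ h))]
  exact (htrans φ (fun pr h => h)).mp hsat

end MainConstruction

/-- a simple inequality formula `φ` is QP-valid iff its translation
`φ^△` is QPG-valid. -/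
theorem SIF_QP_valid_iff_QPG_valid (φ : SIF) :
    QPValid φ ↔ QPGValid (sifTrans φ) := by
  constructor
  · intro hQP W _ μ hU hK v
    rw [qgeval_sifTrans_eq_one_iff μ hU.1 v φ]
    exact key_construction μ hU hK v φ hQP
  · intro hQPG U hne P hP v x
    have h := hQPG U hne (P x) (prob_isUncertainty (hP x)) (prob_muKPS (hP x)) v
    exact (qgeval_sifTrans_eq_one_iff (P x) (hP x).2.2.1 v φ).mp h
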